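/- Let v_1, …, v_N ∈ ℤ^d be vectors whose convex hull Δ (together with the origin) has the origin as its unique interior lattice point, and suppose v_j ≠ 0 for a fixed index j. Let K ⊂ ℤ^N be the kernel of the map e_i ↦ v_i, let K_0 = K ∩ ℕ^N, and let K_j = {k ∈ K : k_j < 0, k_i ≥ 0 for i ≠ j}. Then the convex cone generated by K_0 ∪ K_j in ℝ^N is strictly convex: there exists w ∈ ℝ^N such that ⟨w, k⟩ > 0 for every nonzero k ∈ K_0 ∪ K_j. -/
import Mathlib

theorem stmt8 (N d : ℕ) (v : Fin N → Fin d → ℤ) (j : Fin N) (hvj : v j ≠ 0)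
    (Δ : Set (Fin d → ℝ))
    (hΔ : Δ = convexHull ℝ (insert 0 (Set.range (fun i => fun x => ((v i x : ℤ) : ℝ)))))
    (h0 : (0 : Fin d → ℝ) ∈ interior Δ)
    (huniq : ∀ p : Fin d → ℤ, (fun x => ((p x : ℤ) : ℝ)) ∈ interior Δ → p = 0) :
    ∃ w : Fin N → ℝ, ∀ k : Fin N → ℤ, k ≠ 0 →
      ((∑ i, k i • v i = 0 ∧ ∀ i, 0 ≤ k i) ∨
        (∑ i, k i • v i = 0 ∧ k j < 0 ∧ ∀ i, i ≠ j → 0 ≤ k i)) →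
      0 < ∑ i, w i * (k i : ℝ) := by
  classical
  set f : Fin N → Fin d → ℝ := fun i => fun x => ((v i x : ℤ) : ℝ) with hf
  -- geometric key lemma
  have key : ∀ k : Fin N → ℤ, ∑ i, k i • v i = 0 → k j < 0 → (∀ i, i ≠ j → 0 ≤ k i) →
      0 ≤ ∑ i, k i := by
    intro k hsum hkj hpos
    by_contra hneg
    push_neg at hneg
    set S : ℤ := ∑ i ∈ Finset.univ.erase j, k i with hS
    have hsplit : ∑ i, k i = k j + S := (Finset.add_sum_erase _ _ (Finset.mem_univ j)).symm
    have hS0 : 0 ≤ S := Finset.sum_nonneg fun i hi => hpos i (Finset.ne_of_mem_erase hi)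
    have hSm : S < -k j := by omega
    -- pointwise integer identity
    have hxid : ∀ x, ∑ i ∈ Finset.univ.erase j, k i * v i x = (-k j) * v j x := by
      intro x
      have hx : ∑ i, k i * v i x = 0 := by
        have := congrFun hsum x
        simpa [Finset.sum_apply] using this
      rw [← Finset.add_sum_erase _ (fun i => k i * v i x) (Finset.mem_univ j)] at hx
      linarith
    rcases eq_or_lt_of_le hS0 with hSz | hSp
    · -- S = 0 : all other coordinates vanish, so v j = 0
      have hzero : ∀ i ∈ Finset.univ.erase j, k i = 0 :=
        (Finset.sum_eq_zero_iff_of_nonneg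
          (fun i hi => hpos i (Finset.ne_of_mem_erase hi))).mp hSz.symm
      have hvj0 : ∀ x, (-k j) * v j x = 0 := by
        intro x
        rw [← hxid x]
        exact Finset.sum_eq_zero fun i hi => by rw [hzero i hi, zero_mul]
      apply hvj
      funext x
      rcases mul_eq_zero.mp (hvj0 x) with h | h
      · omega
      · exact h
    · -- 0 < S : v j is an interior lattice point, contradiction
      have hreal : ∑ i ∈ Finset.univ.erase j, (k i : ℝ) • f i = ((-k j : ℤ) : ℝ) • f j := by
        funext x
        have := hxid x
        simp only [Finset.sum_apply, Pi.smul_apply, smul_eq_mul, hf]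
        push_cast
        exact_mod_cast congrArg (fun z : ℤ => (z : ℝ)) this
      have hSsum : ∑ i ∈ Finset.univ.erase j, ((k i : ℝ)) = (S : ℝ) := by
        rw [hS]; push_cast; rfl
      have hSpR : (0 : ℝ) < (S : ℝ) := by exact_mod_cast hSp
      have hmR : (0 : ℝ) < ((-k j : ℤ) : ℝ) := by exact_mod_cast (by omega : (0:ℤ) < -k j)
      set q := (Finset.univ.erase j).centerMass (fun i => (k i : ℝ)) f with hq
      have hqΔ : q ∈ Δ := by
        rw [hΔ]
        apply Finset.centerMass_mem_convexHull
        · intro i hi; exact_mod_cast hpos i (Finset.ne_of_mem_erase hi)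
        · rw [hSsum]; exact hSpR
        · intro i hi; exact Set.mem_insert_of_mem _ ⟨i, rfl⟩
      have hqval : q = (((-k j : ℤ) : ℝ) / (S : ℝ)) • f j := by
        rw [hq, Finset.centerMass, hSsum, hreal, smul_smul]
        congr 1
        field_simp
      have hΔconv : Convex ℝ Δ := hΔ ▸ convex_convexHull ℝ _
      set b : ℝ := (S : ℝ) / ((-k j : ℤ) : ℝ) with hb
      have hb0 : 0 < b := div_pos hSpR hmR
      have hb1 : b < 1 := by
        rw [hb, div_lt_one hmR]
        exact_mod_cast hSm
      have hmem : (1 - b) • (0 : Fin d → ℝ) + b • q ∈ interior Δ :=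
        hΔconv.combo_interior_self_mem_interior h0 hqΔ (by linarith) hb0.le (by ring)
      have hfj : f j ∈ interior Δ := by
        have heq : (1 - b) • (0 : Fin d → ℝ) + b • q = f j := by
          rw [hqval, smul_zero, zero_add, smul_smul, hb]
          rw [div_mul_div_comm]
          rw [mul_comm]
          rw [div_self (by positivity)]
          rw [one_smul]
        rwa [heq] at hmem
      exact hvj (huniq (v j) hfj)
  -- the weight vector
  refine ⟨fun i => if i = j then 1/2 else 1, ?_⟩
  intro k hk hcase
  have hsum_eq : ∑ i, (if i = j then (1/2:ℝ) else 1) * (k i : ℝ)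
      = (∑ i, (k i : ℝ)) - (1/2) * (k j : ℝ) := by
    have hterm : ∀ i ∈ Finset.univ, (if i = j then (1/2:ℝ) else 1) * (k i : ℝ)
        = (k i : ℝ) - (if i = j then (1/2:ℝ) * (k i : ℝ) else 0) := by
      intro i _; split <;> ring
    rw [Finset.sum_congr rfl hterm, Finset.sum_sub_distrib]
    simp
  rw [hsum_eq]
  have hcast : (∑ i, (k i : ℝ)) = ((∑ i, k i : ℤ) : ℝ) := by push_cast; rfl
  rcases hcase with ⟨hsum, hpos⟩ | ⟨hsum, hkj, hpos⟩
  · have hEx : ∃ i ∈ Finset.univ, 0 < k i := by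
      by_contra h
      push_neg at h
      exact hk (funext fun i => le_antisymm (h i (Finset.mem_univ i)) (hpos i))
    have hpossum : (0:ℤ) < ∑ i, k i := Finset.sum_pos' (fun i _ => hpos i) hEx
    have hle : k j ≤ ∑ i, k i := Finset.single_le_sum (fun i _ => hpos i) (Finset.mem_univ j)
    have h1 : (k j : ℝ) ≤ ((∑ i, k i : ℤ) : ℝ) := by exact_mod_cast hle
    have h2 : (0:ℝ) < ((∑ i, k i : ℤ) : ℝ) := by exact_mod_cast hpossum
    rw [hcast]; linarith
  · have h0s : (0:ℤ) ≤ ∑ i, k i := key k hsum hkj hpos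
    have h1 : (0:ℝ) ≤ ((∑ i, k i : ℤ) : ℝ) := by exact_mod_cast h0s
    have h2 : (k j : ℝ) < 0 := by exact_mod_cast hkj
    rw [hcast]; linarith
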